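/- Let T, U, V, W₁, W₂, Y₁, Y₂ be random variables on a common probability space taking values in finite sets, satisfying the equalities: I(U;Y₁|W₁) = I(U;Y₁|(T,W₁)) = I(U;Y₁|(T,V,W₁)); I(V;Y₂|W₂) = I(V;Y₂|(T,W₂)) = I(V;Y₂|(T,U,W₂)); I(W₂;Y₁|(T,W₁)) = I(W₁;Y₂|(T,W₂)); I(W₂;Y₁|(T,U,W₁)) = I(W₁;Y₂|(T,U,W₂)); and I(W₂;Y₁|(T,V,W₁)) = I(W₁;Y₂|(T,V,W₂)). Then for any real numbers R₀, R₁, R₂ with R₀ ≤ min{I(T;Y₁|W₁), I(T;Y₂|W₂)}, R₁ ≤ I(U;Y₁|W₁), and R₂ ≤ I(V;Y₂|W₂), the following hold: R₀ + R₁ ≤ I((T,U);Y₁|W₁); R₀ + R₁ ≤ I(U;Y₁|(T,W₁,W₂)) + I((T,W₁);Y₂|W₂); R₀ + R₂ ≤ I((T,V);Y₂|W₂); R₀ + R₂ ≤ I(V;Y₂|(T,W₁,W₂)) + I((T,W₂);Y₁|W₁); R₀ + R₁ + R₂ ≤ I(U;Y₁|(T,V,W₁,W₂)) + I((T,V,W₁);Y₂|W₂);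 R₀ + R₁ + R₂ ≤ I(V;Y₂|(T,U,W₁,W₂)) + I((T,U,W₂);Y₁|W₁); R₀ + R₁ + R₂ ≤ I(U;Y₁|(T,V,W₁,W₂)) + I((T,W₁,W₂);Y₁) + I(V;Y₂|(T,W₁,W₂)); and R₀ + R₁ + R₂ ≤ I(V;Y₂|(T,U,W₁,W₂)) + I((T,W₁,W₂);Y₂) + I(U;Y₁|(T,W₁,W₂)). -/

import Mathlib

open MeasureTheory Real

/-- Shannon entropy (in nats) of a random variable taking values in a finite set. -/
noncomputable def entropy {Ω : Type*} [MeasurableSpace Ω] (μ : Measure Ω)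
    {S : Type*} [Fintype S] (X : Ω → S) : ℝ :=
  ∑ x : S, Real.negMulLog (μ (X ⁻¹' {x})).toReal

/-- Mutual information `I(X;Y) = H(X) + H(Y) - H(X,Y)`. -/
noncomputable def mutualInfo {Ω : Type*} [MeasurableSpace Ω] (μ : Measure Ω)
    {S T : Type*} [Fintype S] [Fintype T] (X : Ω → S) (Y : Ω → T) : ℝ :=
  entropy μ X + entropy μ Y - entropy μ (fun ω => (X ω, Y ω))

/-- Conditional mutual information `I(X;Y|Z) = H(X,Z) + H(Y,Z) - H(X,Y,Z) - H(Z)`. -/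
noncomputable def condMutualInfo {Ω : Type*} [MeasurableSpace Ω] (μ : Measure Ω)
    {S T R : Type*} [Fintype S] [Fintype T] [Fintype R]
    (X : Ω → S) (Y : Ω → T) (Z : Ω → R) : ℝ :=
  entropy μ (fun ω => (X ω, Z ω)) + entropy μ (fun ω => (Y ω, Z ω))
    - entropy μ (fun ω => (X ω, Y ω, Z ω)) - entropy μ Z

section Aux

variable {Ω : Type*} [MeasurableSpace Ω] (μ : Measure Ω)

lemma entropy_comp {S S' : Type*} [Fintype S] [Fintype S'] (X : Ω → S) (f : S → S')
    (hf : Function.Injective f) :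
    entropy μ (fun ω => f (X ω)) = entropy μ X := by
  classical
  unfold entropy
  have h0 : ∀ y ∈ (Finset.univ : Finset S'), y ∉ Finset.univ.image f →
      Real.negMulLog (μ ((fun ω => f (X ω)) ⁻¹' {y})).toReal = 0 := by
    intro y _ hy
    have : (fun ω => f (X ω)) ⁻¹' {y} = ∅ := by
      ext ω
      simp only [Set.mem_preimage, Set.mem_singleton_iff, Set.mem_empty_iff_false, iff_false]
      intro h; exact hy (Finset.mem_image.2 ⟨X ω, Finset.mem_univ _, h⟩)
    rw [this]
    simp [Real.negMulLog]
  rw [← Finset.sum_subset (Finset.subset_univ (Finset.univ.image f)) h0,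
    Finset.sum_image (fun a _ b _ h => hf h)]
  refine Finset.sum_congr rfl fun x _ => ?_
  have : (fun ω => f (X ω)) ⁻¹' {f x} = X ⁻¹' {x} := by
    ext ω; simp [hf.eq_iff]
  rw [this]

lemma entropy_congr {S S' : Type*} [Fintype S] [Fintype S'] (X : Ω → S) (X' : Ω → S')
    (f : S → S') (hf : Function.Injective f) (h : ∀ ω, X' ω = f (X ω)) :
    entropy μ X' = entropy μ X := by
  have : X' = fun ω => f (X ω) := funext h
  rw [this]; exact entropy_comp μ X f hf

lemma cmi_comp_right {S T R R' : Type*} [Fintype S] [Fintype T] [Fintype R] [Fintype R']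
    (X : Ω → S) (Y : Ω → T) (Z : Ω → R) (g : R → R') (hg : Function.Injective g) :
    condMutualInfo μ X Y (fun ω => g (Z ω)) = condMutualInfo μ X Y Z := by
  unfold condMutualInfo
  rw [entropy_congr μ (fun ω => (X ω, Z ω)) (fun ω => (X ω, g (Z ω)))
      (Prod.map id g) (Function.injective_id.prodMap hg) (fun ω => rfl),
    entropy_congr μ (fun ω => (Y ω, Z ω)) (fun ω => (Y ω, g (Z ω)))
      (Prod.map id g) (Function.injective_id.prodMap hg) (fun ω => rfl),
    entropy_congr μ (fun ω => (X ω, Y ω, Z ω)) (fun ω => (X ω, Y ω, g (Z ω)))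
      (Prod.map id (Prod.map id g))
      (Function.injective_id.prodMap (Function.injective_id.prodMap hg)) (fun ω => rfl),
    entropy_comp μ Z g hg]

lemma cmi_comp_left {S S' T R : Type*} [Fintype S] [Fintype S'] [Fintype T] [Fintype R]
    (X : Ω → S) (Y : Ω → T) (Z : Ω → R) (f : S → S') (hf : Function.Injective f) :
    condMutualInfo μ (fun ω => f (X ω)) Y Z = condMutualInfo μ X Y Z := by
  unfold condMutualInfo
  rw [entropy_congr μ (fun ω => (X ω, Z ω)) (fun ω => (f (X ω), Z ω))
      (Prod.map f id) (hf.prodMap Function.injective_id) (fun ω => rfl),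
    entropy_congr μ (fun ω => (X ω, Y ω, Z ω)) (fun ω => (f (X ω), Y ω, Z ω))
      (Prod.map f id) (hf.prodMap Function.injective_id) (fun ω => rfl)]

lemma mutualInfo_comp_left {S S' T : Type*} [Fintype S] [Fintype S'] [Fintype T]
    (X : Ω → S) (Y : Ω → T) (f : S → S') (hf : Function.Injective f) :
    mutualInfo μ (fun ω => f (X ω)) Y = mutualInfo μ X Y := by
  unfold mutualInfo
  rw [entropy_comp μ X f hf,
    entropy_congr μ (fun ω => (X ω, Y ω)) (fun ω => (f (X ω), Y ω))
      (Prod.map f id) (hf.prodMap Function.injective_id) (fun ω => rfl)]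

lemma chain3 {SA SB ST SR : Type*} [Fintype SA] [Fintype SB] [Fintype ST] [Fintype SR]
    (A : Ω → SA) (B : Ω → SB) (Y : Ω → ST) (Z : Ω → SR) :
    condMutualInfo μ (fun ω => (A ω, B ω)) Y Z
      = condMutualInfo μ A Y Z + condMutualInfo μ B Y (fun ω => (A ω, Z ω)) := by
  unfold condMutualInfo
  have e1 : entropy μ (fun ω => (B ω, (A ω, Z ω))) = entropy μ (fun ω => ((A ω, B ω), Z ω)) := by
    rw [entropy_congr μ (fun ω => (A ω, (B ω, Z ω))) (fun ω => (B ω, (A ω, Z ω)))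
        (fun p => (p.2.1, (p.1, p.2.2)))
        (Function.LeftInverse.injective (g := fun q => (q.2.1, (q.1, q.2.2))) (fun p => rfl))
        (fun ω => rfl),
      entropy_congr μ (fun ω => (A ω, (B ω, Z ω))) (fun ω => ((A ω, B ω), Z ω))
        (fun p => ((p.1, p.2.1), p.2.2))
        (Function.LeftInverse.injective (g := fun q => (q.1.1, (q.1.2, q.2))) (fun p => rfl))
        (fun ω => rfl)]
  have e2 : entropy μ (fun ω => (Y ω, (A ω, Z ω))) = entropy μ (fun ω => (A ω, Y ω, Z ω)) :=
    entropy_congr μ (fun ω => (A ω, Y ω, Z ω)) (fun ω => (Y ω, (A ω, Z ω)))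
      (fun p => (p.2.1, (p.1, p.2.2)))
      (Function.LeftInverse.injective (g := fun q => (q.2.1, (q.1, q.2.2))) (fun p => rfl))
      (fun ω => rfl)
  have e3 : entropy μ (fun ω => (B ω, Y ω, (A ω, Z ω)))
      = entropy μ (fun ω => ((A ω, B ω), Y ω, Z ω)) := by
    rw [entropy_congr μ (fun ω => (A ω, (B ω, (Y ω, Z ω)))) (fun ω => (B ω, Y ω, (A ω, Z ω)))
        (fun p => (p.2.1, (p.2.2.1, (p.1, p.2.2.2))))
        (Function.LeftInverse.injective (g := fun q => (q.2.2.1, (q.1, (q.2.1, q.2.2.2)))) (fun p => rfl))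
        (fun ω => rfl),
      entropy_congr μ (fun ω => (A ω, (B ω, (Y ω, Z ω)))) (fun ω => ((A ω, B ω), Y ω, Z ω))
        (fun p => ((p.1, p.2.1), p.2.2))
        (Function.LeftInverse.injective (g := fun q => (q.1.1, (q.1.2, q.2))) (fun p => rfl))
        (fun ω => rfl)]
  rw [e1, e2, e3] at *
  ring

lemma exchange {SA SB ST SR : Type*} [Fintype SA] [Fintype SB] [Fintype ST] [Fintype SR]
    (A : Ω → SA) (B : Ω → SB) (Y : Ω → ST) (Z : Ω → SR) :
    condMutualInfo μ A Y Z + condMutualInfo μ B Y (fun ω => (A ω, Z ω))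
      = condMutualInfo μ B Y Z + condMutualInfo μ A Y (fun ω => (B ω, Z ω)) := by
  rw [← chain3, ← chain3]
  exact cmi_comp_left μ (fun ω => (B ω, A ω)) Y Z Prod.swap Prod.swap_injective

end Aux
lemma term_bound {p A B C : ℝ} (hp : 0 ≤ p) (hpA : p ≤ A) (hpB : p ≤ B) (hAC : A ≤ C) :
    p - A * B / C ≤ p * (Real.log p + Real.log C - Real.log A - Real.log B) := by
  rcases hp.eq_or_lt with h | h
  · rw [← h]
    have hA : 0 ≤ A := h.le.trans hpA
    have hB : 0 ≤ B := h.le.trans hpB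
    have : 0 ≤ A * B / C := div_nonneg (mul_nonneg hA hB) (le_trans hA hAC)
    simp
    linarith
  · have hA : 0 < A := lt_of_lt_of_le h hpA
    have hB : 0 < B := lt_of_lt_of_le h hpB
    have hC : 0 < C := lt_of_lt_of_le hA hAC
    have hb : 0 < A * B / C := by positivity
    have hlog : Real.log p + Real.log C - Real.log A - Real.log B
        = - Real.log ((A * B / C) / p) := by
      rw [Real.log_div (ne_of_gt hb) (ne_of_gt h),
        Real.log_div (ne_of_gt (mul_pos hA hB)) (ne_of_gt hC),
        Real.log_mul (ne_of_gt hA) (ne_of_gt hB)]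
      ring
    rw [hlog]
    have h1 : Real.log ((A * B / C) / p) ≤ (A * B / C) / p - 1 :=
      Real.log_le_sub_one_of_pos (by positivity)
    have h4 := mul_le_mul_of_nonneg_left h1 hp
    have h3 : p * ((A * B / C) / p - 1) = A * B / C - p := by field_simp
    nlinarith

lemma sum_rot1 {S T R : Type*} [Fintype S] [Fintype T] [Fintype R] (f : S → T → R → ℝ) :
    (∑ t : T, ∑ r : R, ∑ s : S, f s t r) = ∑ s, ∑ t, ∑ r, f s t r :=
  (Finset.sum_congr rfl (fun _ _ => Finset.sum_comm)).trans (Finset.sum_comm)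

lemma sum_rot2 {S T R : Type*} [Fintype S] [Fintype T] [Fintype R] (f : S → T → R → ℝ) :
    (∑ r : R, ∑ s : S, ∑ t : T, f s t r) = ∑ s, ∑ t, ∑ r, f s t r :=
  (Finset.sum_comm).trans (Finset.sum_congr rfl (fun _ _ => Finset.sum_comm))

lemma cmi_dist_nonneg {S T R : Type*} [Fintype S] [Fintype T] [Fintype R]
    (p : S → T → R → ℝ) (hp : ∀ s t r, 0 ≤ p s t r)
    (hsum : ∑ s, ∑ t, ∑ r, p s t r = 1) :
    0 ≤ (∑ s, ∑ r, Real.negMulLog (∑ t, p s t r))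
      + (∑ t, ∑ r, Real.negMulLog (∑ s, p s t r))
      - (∑ s, ∑ t, ∑ r, Real.negMulLog (p s t r))
      - (∑ r, Real.negMulLog (∑ s, ∑ t, p s t r)) := by
  classical
  have eq1 : (∑ s, ∑ r, Real.negMulLog (∑ t, p s t r))
      = ∑ s, ∑ t, ∑ r, -(p s t r * Real.log (∑ t', p s t' r)) := by
    refine Finset.sum_congr rfl fun s _ => ?_
    rw [show (∑ r, Real.negMulLog (∑ t, p s t r))
        = ∑ r, ∑ t, -(p s t r * Real.log (∑ t', p s t' r)) from
      Finset.sum_congr rfl fun r _ => by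
        rw [Real.negMulLog, neg_mul, Finset.sum_mul, ← Finset.sum_neg_distrib]]
    exact Finset.sum_comm
  have eq2 : (∑ t, ∑ r, Real.negMulLog (∑ s, p s t r))
      = ∑ s, ∑ t, ∑ r, -(p s t r * Real.log (∑ s', p s' t r)) := by
    rw [← sum_rot1 (fun s t r => -(p s t r * Real.log (∑ s', p s' t r)))]
    refine Finset.sum_congr rfl fun t _ => Finset.sum_congr rfl fun r _ => ?_
    rw [Real.negMulLog, neg_mul, Finset.sum_mul, ← Finset.sum_neg_distrib]
  have eq3 : (∑ s, ∑ t, ∑ r, Real.negMulLog (p s t r))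
      = ∑ s, ∑ t, ∑ r, -(p s t r * Real.log (p s t r)) := by
    refine Finset.sum_congr rfl fun s _ => Finset.sum_congr rfl fun t _ =>
      Finset.sum_congr rfl fun r _ => ?_
    rw [Real.negMulLog, neg_mul]
  have eq4 : (∑ r, Real.negMulLog (∑ s, ∑ t, p s t r))
      = ∑ s, ∑ t, ∑ r, -(p s t r * Real.log (∑ s', ∑ t', p s' t' r)) := by
    rw [← sum_rot2 (fun s t r => -(p s t r * Real.log (∑ s', ∑ t', p s' t' r)))]
    refine Finset.sum_congr rfl fun r _ => ?_
    rw [Real.negMulLog, neg_mul, Finset.sum_mul, ← Finset.sum_neg_distrib]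
    refine Finset.sum_congr rfl fun s _ => ?_
    rw [Finset.sum_mul, ← Finset.sum_neg_distrib]
  have comb : ∀ (f g h k : S → T → R → ℝ),
      (∑ s, ∑ t, ∑ r, f s t r) + (∑ s, ∑ t, ∑ r, g s t r)
        - (∑ s, ∑ t, ∑ r, h s t r) - (∑ s, ∑ t, ∑ r, k s t r)
      = ∑ s, ∑ t, ∑ r, (f s t r + g s t r - h s t r - k s t r) := by
    intro f g h k
    simp only [Finset.sum_sub_distrib, Finset.sum_add_distrib]
  rw [eq1, eq2, eq3, eq4, comb]
  have hterm : ∀ s t r, p s t r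
        - (∑ t', p s t' r) * (∑ s', p s' t r) / (∑ s', ∑ t', p s' t' r)
      ≤ -(p s t r * Real.log (∑ t', p s t' r)) + -(p s t r * Real.log (∑ s', p s' t r))
        - -(p s t r * Real.log (p s t r)) - -(p s t r * Real.log (∑ s', ∑ t', p s' t' r)) := by
    intro s t r
    have hpA : p s t r ≤ ∑ t', p s t' r :=
      Finset.single_le_sum (fun t' _ => hp s t' r) (Finset.mem_univ t)
    have hpB : p s t r ≤ ∑ s', p s' t r :=
      Finset.single_le_sum (fun s' _ => hp s' t r) (Finset.mem_univ s)
    have hAC : (∑ t', p s t' r) ≤ ∑ s', ∑ t', p s' t' r :=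
      Finset.single_le_sum (f := fun s' => ∑ t', p s' t' r)
        (fun s' _ => Finset.sum_nonneg fun t' _ => hp s' t' r) (Finset.mem_univ s)
    calc p s t r - (∑ t', p s t' r) * (∑ s', p s' t r) / (∑ s', ∑ t', p s' t' r)
        ≤ p s t r * (Real.log (p s t r) + Real.log (∑ s', ∑ t', p s' t' r)
            - Real.log (∑ t', p s t' r) - Real.log (∑ s', p s' t r)) :=
          term_bound (hp s t r) hpA hpB hAC
      _ = _ := by ring
  have hlow : (∑ s, ∑ t, ∑ r, (p s t r
        - (∑ t', p s t' r) * (∑ s', p s' t r) / (∑ s', ∑ t', p s' t' r)))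
      ≤ ∑ s, ∑ t, ∑ r, (-(p s t r * Real.log (∑ t', p s t' r))
        + -(p s t r * Real.log (∑ s', p s' t r))
        - -(p s t r * Real.log (p s t r))
        - -(p s t r * Real.log (∑ s', ∑ t', p s' t' r))) :=
    Finset.sum_le_sum fun s _ => Finset.sum_le_sum fun t _ => Finset.sum_le_sum fun r _ =>
      hterm s t r
  have hq : (∑ s, ∑ t, ∑ r,
        (∑ t', p s t' r) * (∑ s', p s' t r) / (∑ s', ∑ t', p s' t' r)) ≤ 1 := by
    rw [← sum_rot2 (fun s t r => (∑ t', p s t' r) * (∑ s', p s' t r) / (∑ s', ∑ t', p s' t' r))]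
    have hper : ∀ r, (∑ s, ∑ t, (∑ t', p s t' r) * (∑ s', p s' t r) / (∑ s', ∑ t', p s' t' r))
        ≤ ∑ s, ∑ t, p s t r := by
      intro r
      have e : (∑ s, ∑ t, (∑ t', p s t' r) * (∑ s', p s' t r) / (∑ s', ∑ t', p s' t' r))
          = (∑ s, ∑ t', p s t' r) * (∑ t, ∑ s', p s' t r) / (∑ s', ∑ t', p s' t' r) := by
        rw [Finset.sum_mul, Finset.sum_div]
        refine Finset.sum_congr rfl fun s _ => ?_
        rw [Finset.mul_sum, Finset.sum_div]
      rw [e]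
      have e2 : (∑ t, ∑ s', p s' t r) = ∑ s', ∑ t', p s' t' r := Finset.sum_comm
      rw [e2]
      rcases eq_or_lt_of_le (Finset.sum_nonneg fun s _ =>
          Finset.sum_nonneg fun t _ => hp s t r) with hC | hC
      · rw [← hC]; simp
      · rw [mul_div_assoc, div_self (ne_of_gt hC), mul_one]
    calc (∑ r, ∑ s, ∑ t, (∑ t', p s t' r) * (∑ s', p s' t r) / (∑ s', ∑ t', p s' t' r))
        ≤ ∑ r, ∑ s, ∑ t, p s t r := Finset.sum_le_sum fun r _ => hper r
      _ = 1 := by rw [sum_rot2, hsum]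
  have heval : (∑ s, ∑ t, ∑ r, (p s t r
        - (∑ t', p s t' r) * (∑ s', p s' t r) / (∑ s', ∑ t', p s' t' r)))
      = 1 - ∑ s, ∑ t, ∑ r,
          (∑ t', p s t' r) * (∑ s', p s' t r) / (∑ s', ∑ t', p s' t' r) := by
    simp only [Finset.sum_sub_distrib, hsum]
  linarith

section Meas

variable {Ω : Type*} [MeasurableSpace Ω] (μ : Measure Ω) [IsProbabilityMeasure μ]

lemma measure_decomp {T' : Type*} [Fintype T'] {E : Set Ω} (hE : MeasurableSet E)
    {Y : Ω → T'} (hY : ∀ t, MeasurableSet (Y ⁻¹' {t})) :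
    (μ E).toReal = ∑ t, (μ (E ∩ Y ⁻¹' {t})).toReal := by
  classical
  have key : ∑ t, μ (E ∩ Y ⁻¹' {t}) = μ E := by
    have hd : Set.PairwiseDisjoint (↑(Finset.univ : Finset T'))
        (fun t => E ∩ Y ⁻¹' {t}) := by
      intro a _ b _ hab
      refine Set.disjoint_left.2 ?_
      rintro ω ⟨_, ha⟩ ⟨_, hb⟩
      simp only [Set.mem_preimage, Set.mem_singleton_iff] at ha hb
      exact hab (ha ▸ hb ▸ rfl)
    rw [← measure_biUnion_finset hd (fun t _ => hE.inter (hY t))]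
    congr 1
    ext ω
    simp
  rw [← key, ENNReal.toReal_sum (fun t _ => measure_ne_top μ _)]

lemma condMutualInfo_nonneg {S T R : Type*}
    [Fintype S] [MeasurableSpace S] [MeasurableSingletonClass S]
    [Fintype T] [MeasurableSpace T] [MeasurableSingletonClass T]
    [Fintype R] [MeasurableSpace R] [MeasurableSingletonClass R]
    (X : Ω → S) (Y : Ω → T) (Z : Ω → R)
    (hX : Measurable X) (hY : Measurable Y) (hZ : Measurable Z) :
    0 ≤ condMutualInfo μ X Y Z := by
  classical
  set p : S → T → R → ℝ :=
    fun s t r => (μ (X ⁻¹' {s} ∩ Y ⁻¹' {t} ∩ Z ⁻¹' {r})).toReal with hpdef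
  have mX : ∀ s : S, MeasurableSet (X ⁻¹' {s}) := fun s => hX (measurableSet_singleton s)
  have mY : ∀ t : T, MeasurableSet (Y ⁻¹' {t}) := fun t => hY (measurableSet_singleton t)
  have mZ : ∀ r : R, MeasurableSet (Z ⁻¹' {r}) := fun r => hZ (measurableSet_singleton r)
  have H1 : entropy μ (fun ω => (X ω, Z ω))
      = ∑ s, ∑ r, Real.negMulLog (∑ t, p s t r) := by
    rw [entropy, Fintype.sum_prod_type]
    refine Finset.sum_congr rfl fun s _ => Finset.sum_congr rfl fun r _ => ?_
    congr 1
    have e : (fun ω => (X ω, Z ω)) ⁻¹' {(s, r)} = X ⁻¹' {s} ∩ Z ⁻¹' {r} := by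
      ext ω; simp [Prod.ext_iff]
    rw [e, measure_decomp μ ((mX s).inter (mZ r)) mY]
    refine Finset.sum_congr rfl fun t _ => ?_
    have e2 : X ⁻¹' {s} ∩ Z ⁻¹' {r} ∩ Y ⁻¹' {t}
        = X ⁻¹' {s} ∩ Y ⁻¹' {t} ∩ Z ⁻¹' {r} := by
      ext ω
      simp only [Set.mem_inter_iff, Set.mem_preimage, Set.mem_singleton_iff]
      tauto
    rw [e2, hpdef]
  have H2 : entropy μ (fun ω => (Y ω, Z ω))
      = ∑ t, ∑ r, Real.negMulLog (∑ s, p s t r) := by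
    rw [entropy, Fintype.sum_prod_type]
    refine Finset.sum_congr rfl fun t _ => Finset.sum_congr rfl fun r _ => ?_
    congr 1
    have e : (fun ω => (Y ω, Z ω)) ⁻¹' {(t, r)} = Y ⁻¹' {t} ∩ Z ⁻¹' {r} := by
      ext ω; simp [Prod.ext_iff]
    rw [e, measure_decomp μ ((mY t).inter (mZ r)) mX]
    refine Finset.sum_congr rfl fun s _ => ?_
    have e2 : Y ⁻¹' {t} ∩ Z ⁻¹' {r} ∩ X ⁻¹' {s}
        = X ⁻¹' {s} ∩ Y ⁻¹' {t} ∩ Z ⁻¹' {r} := by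
      ext ω
      simp only [Set.mem_inter_iff, Set.mem_preimage, Set.mem_singleton_iff]
      tauto
    rw [e2, hpdef]
  have H3 : entropy μ (fun ω => (X ω, Y ω, Z ω))
      = ∑ s, ∑ t, ∑ r, Real.negMulLog (p s t r) := by
    rw [entropy, Fintype.sum_prod_type]
    refine Finset.sum_congr rfl fun s _ => ?_
    rw [Fintype.sum_prod_type]
    refine Finset.sum_congr rfl fun t _ => Finset.sum_congr rfl fun r _ => ?_
    have e : (fun ω => (X ω, Y ω, Z ω)) ⁻¹' {(s, t, r)}
        = X ⁻¹' {s} ∩ Y ⁻¹' {t} ∩ Z ⁻¹' {r} := by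
      ext ω
      simp only [Set.mem_preimage, Set.mem_singleton_iff, Prod.ext_iff, Set.mem_inter_iff]
      tauto
    rw [e, hpdef]
  have H4 : entropy μ Z = ∑ r, Real.negMulLog (∑ s, ∑ t, p s t r) := by
    rw [entropy]
    refine Finset.sum_congr rfl fun r _ => ?_
    congr 1
    have hXY : ∀ st : S × T, MeasurableSet ((fun ω => (X ω, Y ω)) ⁻¹' {st}) := by
      intro st
      have e : (fun ω => (X ω, Y ω)) ⁻¹' {st} = X ⁻¹' {st.1} ∩ Y ⁻¹' {st.2} := by
        ext ω; simp [Prod.ext_iff]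
      rw [e]; exact (mX st.1).inter (mY st.2)
    rw [measure_decomp μ (mZ r) hXY, Fintype.sum_prod_type]
    refine Finset.sum_congr rfl fun s _ => Finset.sum_congr rfl fun t _ => ?_
    have e2 : Z ⁻¹' {r} ∩ (fun ω => (X ω, Y ω)) ⁻¹' {(s, t)}
        = X ⁻¹' {s} ∩ Y ⁻¹' {t} ∩ Z ⁻¹' {r} := by
      ext ω
      simp only [Set.mem_inter_iff, Set.mem_preimage, Set.mem_singleton_iff, Prod.ext_iff]
      tauto
    rw [e2, hpdef]
  have hsum : ∑ s, ∑ t, ∑ r, p s t r = 1 := by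
    have ha : ∀ s t, (∑ r, p s t r) = (μ (X ⁻¹' {s} ∩ Y ⁻¹' {t})).toReal := by
      intro s t
      rw [hpdef]
      exact (measure_decomp μ ((mX s).inter (mY t)) mZ).symm
    have hb : ∀ s, (∑ t, (μ (X ⁻¹' {s} ∩ Y ⁻¹' {t})).toReal) = (μ (X ⁻¹' {s})).toReal :=
      fun s => (measure_decomp μ (mX s) mY).symm
    have hc : (∑ s, (μ (X ⁻¹' {s})).toReal) = (μ (Set.univ : Set Ω)).toReal := by
      rw [measure_decomp μ MeasurableSet.univ mX]
      simp
    calc ∑ s, ∑ t, ∑ r, p s t r = ∑ s, ∑ t, (μ (X ⁻¹' {s} ∩ Y ⁻¹' {t})).toReal :=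
          Finset.sum_congr rfl fun s _ => Finset.sum_congr rfl fun t _ => ha s t
      _ = ∑ s, (μ (X ⁻¹' {s})).toReal := Finset.sum_congr rfl fun s _ => hb s
      _ = 1 := by rw [hc]; simp
  have := cmi_dist_nonneg p (fun s t r => ENNReal.toReal_nonneg) hsum
  rw [condMutualInfo, H1, H2, H3, H4]
  exact this

end Meas

section MI

variable {Ω : Type*} [MeasurableSpace Ω] (μ : Measure Ω) [IsProbabilityMeasure μ]

lemma entropy_const_unit : entropy μ (fun _ : Ω => ()) = 0 := by
  have e : ((fun _ : Ω => ()) ⁻¹' {()}) = Set.univ := by ext ω; simp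
  rw [entropy]
  simp [e, Real.negMulLog]

lemma mutualInfo_eq_cmi {S T : Type*} [Fintype S] [Fintype T] (X : Ω → S) (Y : Ω → T) :
    mutualInfo μ X Y = condMutualInfo μ X Y (fun _ => ()) := by
  unfold mutualInfo condMutualInfo
  rw [entropy_congr μ X (fun ω => (X ω, ())) (fun s => (s, ()))
      (Function.LeftInverse.injective (g := Prod.fst) (fun p => rfl)) (fun ω => rfl),
    entropy_congr μ Y (fun ω => (Y ω, ())) (fun t => (t, ()))
      (Function.LeftInverse.injective (g := Prod.fst) (fun p => rfl)) (fun ω => rfl),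
    entropy_congr μ (fun ω => (X ω, Y ω)) (fun ω => (X ω, Y ω, ()))
      (fun q => (q.1, (q.2, ())))
      (Function.LeftInverse.injective (g := fun q => (q.1, q.2.1)) (fun p => rfl)) (fun ω => rfl),
    entropy_const_unit μ]
  ring

lemma mutualInfo_nonneg {S T : Type*}
    [Fintype S] [MeasurableSpace S] [MeasurableSingletonClass S]
    [Fintype T] [MeasurableSpace T] [MeasurableSingletonClass T]
    (X : Ω → S) (Y : Ω → T) (hX : Measurable X) (hY : Measurable Y) :
    0 ≤ mutualInfo μ X Y := by
  rw [mutualInfo_eq_cmi μ X Y]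
  exact condMutualInfo_nonneg μ X Y (fun _ => ()) hX hY measurable_const

lemma chain2 {SA SB ST : Type*} [Fintype SA] [Fintype SB] [Fintype ST]
    (A : Ω → SA) (B : Ω → SB) (Y : Ω → ST) :
    mutualInfo μ (fun ω => (A ω, B ω)) Y = mutualInfo μ A Y + condMutualInfo μ B Y A := by
  rw [mutualInfo_eq_cmi μ _ Y, mutualInfo_eq_cmi μ A Y, chain3]
  congr 1
  exact cmi_comp_right μ B Y A (fun a => (a, ()))
    (Function.LeftInverse.injective (g := Prod.fst) (fun p => rfl))

end MI

section Inj

lemma inj1 {α β γ : Type*} :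
    Function.Injective (fun q : α × β × γ => (q.2.1, (q.1, q.2.2))) :=
  Function.LeftInverse.injective
    (g := fun p : β × α × γ => (p.2.1, (p.1, p.2.2))) (fun _ => rfl)

lemma inj2 {α β γ : Type*} :
    Function.Injective (fun q : α × β × γ => (q.2.1, (q.2.2, q.1))) :=
  Function.LeftInverse.injective
    (g := fun p : β × γ × α => (p.2.2, (p.1, p.2.1))) (fun _ => rfl)

lemma inj3 {α β γ δ : Type*} :
    Function.Injective (fun q : α × β × γ × δ => (q.2.1, (q.2.2.1, (q.2.2.2, q.1)))) :=
  Function.LeftInverse.injective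
    (g := fun p : β × γ × δ × α => (p.2.2.2, (p.1, (p.2.1, p.2.2.1)))) (fun _ => rfl)

lemma inj4 {α β γ δ : Type*} :
    Function.Injective (fun q : α × β × γ × δ => (q.2.1, (q.2.2.1, (q.1, q.2.2.2)))) :=
  Function.LeftInverse.injective
    (g := fun p : β × γ × α × δ => (p.2.2.1, (p.1, (p.2.1, p.2.2.2)))) (fun _ => rfl)

end Inj
theorem stmt_15
    {Ω : Type*} [MeasurableSpace Ω] (μ : Measure Ω) [IsProbabilityMeasure μ]
    {ST SU SV SW₁ SW₂ SY₁ SY₂ : Type*}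
    [Fintype ST] [MeasurableSpace ST] [MeasurableSingletonClass ST] [Fintype SU] [MeasurableSpace SU] [MeasurableSingletonClass SU] [Fintype SV] [MeasurableSpace SV] [MeasurableSingletonClass SV] [Fintype SW₁] [MeasurableSpace SW₁] [MeasurableSingletonClass SW₁] [Fintype SW₂] [MeasurableSpace SW₂] [MeasurableSingletonClass SW₂] [Fintype SY₁] [MeasurableSpace SY₁] [MeasurableSingletonClass SY₁] [Fintype SY₂] [MeasurableSpace SY₂] [MeasurableSingletonClass SY₂]
    (T : Ω → ST) (U : Ω → SU) (V : Ω → SV) (W₁ : Ω → SW₁) (W₂ : Ω → SW₂) (Y₁ : Ω → SY₁) (Y₂ : Ω → SY₂)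
    (hT : Measurable T) (hU : Measurable U) (hV : Measurable V) (hW₁ : Measurable W₁) (hW₂ : Measurable W₂) (hY₁ : Measurable Y₁) (hY₂ : Measurable Y₂)
    (R₀ R₁ R₂ : ℝ)
    (h0 : condMutualInfo μ U Y₁ W₁ = condMutualInfo μ U Y₁ (fun ω => (T ω, W₁ ω)))
    (h1 : condMutualInfo μ U Y₁ W₁ = condMutualInfo μ U Y₁ (fun ω => (T ω, V ω, W₁ ω)))
    (h2 : condMutualInfo μ V Y₂ W₂ = condMutualInfo μ V Y₂ (fun ω => (T ω, W₂ ω)))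
    (h3 : condMutualInfo μ V Y₂ W₂ = condMutualInfo μ V Y₂ (fun ω => (T ω, U ω, W₂ ω)))
    (h4 : condMutualInfo μ W₂ Y₁ (fun ω => (T ω, W₁ ω)) = condMutualInfo μ W₁ Y₂ (fun ω => (T ω, W₂ ω)))
    (h5 : condMutualInfo μ W₂ Y₁ (fun ω => (T ω, U ω, W₁ ω)) = condMutualInfo μ W₁ Y₂ (fun ω => (T ω, U ω, W₂ ω)))
    (h6 : condMutualInfo μ W₂ Y₁ (fun ω => (T ω, V ω, W₁ ω)) = condMutualInfo μ W₁ Y₂ (fun ω => (T ω, V ω, W₂ ω)))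
    (h7 : R₀ ≤ min (condMutualInfo μ T Y₁ W₁) (condMutualInfo μ T Y₂ W₂))
    (h8 : R₁ ≤ condMutualInfo μ U Y₁ W₁)
    (h9 : R₂ ≤ condMutualInfo μ V Y₂ W₂)
    : R₀ + R₁ ≤ condMutualInfo μ (fun ω => (T ω, U ω)) Y₁ W₁ ∧ R₀ + R₁ ≤ condMutualInfo μ U Y₁ (fun ω => (T ω, W₁ ω, W₂ ω)) + condMutualInfo μ (fun ω => (T ω, W₁ ω)) Y₂ W₂ ∧ R₀ + R₂ ≤ condMutualInfo μ (fun ω => (T ω, V ω)) Y₂ W₂ ∧ R₀ + R₂ ≤ condMutualInfo μ V Y₂ (fun ω => (T ω, W₁ ω, W₂ ω)) + condMutualInfo μ (fun ω => (T ω, W₂ ω)) Y₁ W₁ ∧ R₀ + R₁ + R₂ ≤ condMutualInfo μ U Y₁ (fun ω => (T ω, V ω, W₁ ω, W₂ ω)) + condMutualInfo μ (fun ω => (T ω, V ω, W₁ ω)) Y₂ W₂ ∧ R₀ + R₁ + R₂ ≤ condMutualInfo μ V Y₂ (fun ω => (T ω, U ω, W₁ ω, W₂ ω)) + condMutualInfo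 μ (fun ω => (T ω, U ω, W₂ ω)) Y₁ W₁ ∧ R₀ + R₁ + R₂ ≤ condMutualInfo μ U Y₁ (fun ω => (T ω, V ω, W₁ ω, W₂ ω)) + mutualInfo μ (fun ω => (T ω, W₁ ω, W₂ ω)) Y₁ + condMutualInfo μ V Y₂ (fun ω => (T ω, W₁ ω, W₂ ω)) ∧ R₀ + R₁ + R₂ ≤ condMutualInfo μ V Y₂ (fun ω => (T ω, U ω, W₁ ω, W₂ ω)) + mutualInfo μ (fun ω => (T ω, W₁ ω, W₂ ω)) Y₂ + condMutualInfo μ U Y₁ (fun ω => (T ω, W₁ ω, W₂ ω)) := by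
  have hmin1 : R₀ ≤ condMutualInfo μ T Y₁ W₁ := le_trans h7 (min_le_left _ _)
  have hmin2 : R₀ ≤ condMutualInfo μ T Y₂ W₂ := le_trans h7 (min_le_right _ _)
  refine ⟨?_, ?_, ?_, ?_, ?_, ?_, ?_, ?_⟩
  · -- R₀ + R₁ ≤ I(T,U;Y₁|W₁)
    have c := chain3 μ T U Y₁ W₁
    linarith [c, hmin1, h8, h0]
  · -- R₀ + R₁ ≤ I(U;Y₁|T,W₁,W₂) + I(T,W₁;Y₂|W₂)
    have c : condMutualInfo μ (fun ω => (T ω, W₁ ω)) Y₂ W₂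
        = condMutualInfo μ T Y₂ W₂ + condMutualInfo μ W₁ Y₂ (fun ω => (T ω, W₂ ω)) :=
      chain3 μ T W₁ Y₂ W₂
    have e : condMutualInfo μ U Y₁ (fun ω => (T ω, W₁ ω))
          + condMutualInfo μ W₂ Y₁ (fun ω => (U ω, (T ω, W₁ ω)))
        = condMutualInfo μ W₂ Y₁ (fun ω => (T ω, W₁ ω))
          + condMutualInfo μ U Y₁ (fun ω => (W₂ ω, (T ω, W₁ ω))) :=
      exchange μ U W₂ Y₁ (fun ω => (T ω, W₁ ω))
    have g : condMutualInfo μ U Y₁ (fun ω => (T ω, W₁ ω, W₂ ω))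
        = condMutualInfo μ U Y₁ (fun ω => (W₂ ω, (T ω, W₁ ω))) :=
      cmi_comp_right μ U Y₁ (fun ω => (W₂ ω, (T ω, W₁ ω)))
        (fun q => (q.2.1, (q.2.2, q.1))) inj2
    have n : 0 ≤ condMutualInfo μ W₂ Y₁ (fun ω => (U ω, (T ω, W₁ ω))) :=
      condMutualInfo_nonneg μ _ _ _ hW₂ hY₁ (hU.prodMk (hT.prodMk hW₁))
    linarith [c, e, g, n, hmin2, h8, h0, h4]
  · -- R₀ + R₂ ≤ I(T,V;Y₂|W₂)
    have c := chain3 μ T V Y₂ W₂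
    linarith [c, hmin2, h9, h2]
  · -- R₀ + R₂ ≤ I(V;Y₂|T,W₁,W₂) + I(T,W₂;Y₁|W₁)
    have c : condMutualInfo μ (fun ω => (T ω, W₂ ω)) Y₁ W₁
        = condMutualInfo μ T Y₁ W₁ + condMutualInfo μ W₂ Y₁ (fun ω => (T ω, W₁ ω)) :=
      chain3 μ T W₂ Y₁ W₁
    have e : condMutualInfo μ V Y₂ (fun ω => (T ω, W₂ ω))
          + condMutualInfo μ W₁ Y₂ (fun ω => (V ω, (T ω, W₂ ω)))
        = condMutualInfo μ W₁ Y₂ (fun ω => (T ω, W₂ ω))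
          + condMutualInfo μ V Y₂ (fun ω => (W₁ ω, (T ω, W₂ ω))) :=
      exchange μ V W₁ Y₂ (fun ω => (T ω, W₂ ω))
    have g : condMutualInfo μ V Y₂ (fun ω => (T ω, W₁ ω, W₂ ω))
        = condMutualInfo μ V Y₂ (fun ω => (W₁ ω, (T ω, W₂ ω))) :=
      cmi_comp_right μ V Y₂ (fun ω => (W₁ ω, (T ω, W₂ ω)))
        (fun q => (q.2.1, (q.1, q.2.2))) inj1
    have n : 0 ≤ condMutualInfo μ W₁ Y₂ (fun ω => (V ω, (T ω, W₂ ω))) :=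
      condMutualInfo_nonneg μ _ _ _ hW₁ hY₂ (hV.prodMk (hT.prodMk hW₂))
    linarith [c, e, g, n, hmin1, h9, h2, h4]
  · -- R₀ + R₁ + R₂ ≤ I(U;Y₁|T,V,W₁,W₂) + I(T,V,W₁;Y₂|W₂)
    have c1 : condMutualInfo μ (fun ω => (T ω, V ω, W₁ ω)) Y₂ W₂
        = condMutualInfo μ T Y₂ W₂
          + condMutualInfo μ (fun ω => (V ω, W₁ ω)) Y₂ (fun ω => (T ω, W₂ ω)) :=
      chain3 μ T (fun ω => (V ω, W₁ ω)) Y₂ W₂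
    have c2 : condMutualInfo μ (fun ω => (V ω, W₁ ω)) Y₂ (fun ω => (T ω, W₂ ω))
        = condMutualInfo μ V Y₂ (fun ω => (T ω, W₂ ω))
          + condMutualInfo μ W₁ Y₂ (fun ω => (V ω, (T ω, W₂ ω))) :=
      chain3 μ V W₁ Y₂ (fun ω => (T ω, W₂ ω))
    have g1 : condMutualInfo μ W₁ Y₂ (fun ω => (T ω, V ω, W₂ ω))
        = condMutualInfo μ W₁ Y₂ (fun ω => (V ω, (T ω, W₂ ω))) :=
      cmi_comp_right μ W₁ Y₂ (fun ω => (V ω, (T ω, W₂ ω)))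
        (fun q => (q.2.1, (q.1, q.2.2))) inj1
    have e : condMutualInfo μ U Y₁ (fun ω => (T ω, V ω, W₁ ω))
          + condMutualInfo μ W₂ Y₁ (fun ω => (U ω, (T ω, V ω, W₁ ω)))
        = condMutualInfo μ W₂ Y₁ (fun ω => (T ω, V ω, W₁ ω))
          + condMutualInfo μ U Y₁ (fun ω => (W₂ ω, (T ω, V ω, W₁ ω))) :=
      exchange μ U W₂ Y₁ (fun ω => (T ω, V ω, W₁ ω))
    have g2 : condMutualInfo μ U Y₁ (fun ω => (T ω, V ω, W₁ ω, W₂ ω))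
        = condMutualInfo μ U Y₁ (fun ω => (W₂ ω, (T ω, V ω, W₁ ω))) :=
      cmi_comp_right μ U Y₁ (fun ω => (W₂ ω, (T ω, V ω, W₁ ω)))
        (fun q => (q.2.1, (q.2.2.1, (q.2.2.2, q.1)))) inj3
    have n : 0 ≤ condMutualInfo μ W₂ Y₁ (fun ω => (U ω, (T ω, V ω, W₁ ω))) :=
      condMutualInfo_nonneg μ _ _ _ hW₂ hY₁ (hU.prodMk (hT.prodMk (hV.prodMk hW₁)))
    linarith [c1, c2, g1, e, g2, n, hmin2, h8, h9, h1, h2, h6]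
  · -- R₀ + R₁ + R₂ ≤ I(V;Y₂|T,U,W₁,W₂) + I(T,U,W₂;Y₁|W₁)
    have c1 : condMutualInfo μ (fun ω => (T ω, U ω, W₂ ω)) Y₁ W₁
        = condMutualInfo μ T Y₁ W₁
          + condMutualInfo μ (fun ω => (U ω, W₂ ω)) Y₁ (fun ω => (T ω, W₁ ω)) :=
      chain3 μ T (fun ω => (U ω, W₂ ω)) Y₁ W₁
    have c2 : condMutualInfo μ (fun ω => (U ω, W₂ ω)) Y₁ (fun ω => (T ω, W₁ ω))
        = condMutualInfo μ U Y₁ (fun ω => (T ω, W₁ ω))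
          + condMutualInfo μ W₂ Y₁ (fun ω => (U ω, (T ω, W₁ ω))) :=
      chain3 μ U W₂ Y₁ (fun ω => (T ω, W₁ ω))
    have g1 : condMutualInfo μ W₂ Y₁ (fun ω => (T ω, U ω, W₁ ω))
        = condMutualInfo μ W₂ Y₁ (fun ω => (U ω, (T ω, W₁ ω))) :=
      cmi_comp_right μ W₂ Y₁ (fun ω => (U ω, (T ω, W₁ ω)))
        (fun q => (q.2.1, (q.1, q.2.2))) inj1
    have e : condMutualInfo μ V Y₂ (fun ω => (T ω, U ω, W₂ ω))
          + condMutualInfo μ W₁ Y₂ (fun ω => (V ω, (T ω, U ω, W₂ ω)))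
        = condMutualInfo μ W₁ Y₂ (fun ω => (T ω, U ω, W₂ ω))
          + condMutualInfo μ V Y₂ (fun ω => (W₁ ω, (T ω, U ω, W₂ ω))) :=
      exchange μ V W₁ Y₂ (fun ω => (T ω, U ω, W₂ ω))
    have g2 : condMutualInfo μ V Y₂ (fun ω => (T ω, U ω, W₁ ω, W₂ ω))
        = condMutualInfo μ V Y₂ (fun ω => (W₁ ω, (T ω, U ω, W₂ ω))) :=
      cmi_comp_right μ V Y₂ (fun ω => (W₁ ω, (T ω, U ω, W₂ ω)))
        (fun q => (q.2.1, (q.2.2.1, (q.1, q.2.2.2)))) inj4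
    have n : 0 ≤ condMutualInfo μ W₁ Y₂ (fun ω => (V ω, (T ω, U ω, W₂ ω))) :=
      condMutualInfo_nonneg μ _ _ _ hW₁ hY₂ (hV.prodMk (hT.prodMk (hU.prodMk hW₂)))
    linarith [c1, c2, g1, e, g2, n, hmin1, h8, h9, h0, h3, h5]
  · -- R₀ + R₁ + R₂ ≤ I(U;Y₁|T,V,W₁,W₂) + I(T,W₁,W₂;Y₁) + I(V;Y₂|T,W₁,W₂)
    have m0 : mutualInfo μ (fun ω => (T ω, W₁ ω, W₂ ω)) Y₁
        = mutualInfo μ (fun ω => (W₁ ω, (T ω, W₂ ω))) Y₁ :=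
      mutualInfo_comp_left μ (fun ω => (W₁ ω, (T ω, W₂ ω))) Y₁
        (fun q => (q.2.1, (q.1, q.2.2))) inj1
    have m1 : mutualInfo μ (fun ω => (W₁ ω, (T ω, W₂ ω))) Y₁
        = mutualInfo μ W₁ Y₁ + condMutualInfo μ (fun ω => (T ω, W₂ ω)) Y₁ W₁ :=
      chain2 μ W₁ (fun ω => (T ω, W₂ ω)) Y₁
    have m2 : condMutualInfo μ (fun ω => (T ω, W₂ ω)) Y₁ W₁
        = condMutualInfo μ T Y₁ W₁ + condMutualInfo μ W₂ Y₁ (fun ω => (T ω, W₁ ω)) :=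
      chain3 μ T W₂ Y₁ W₁
    have mn : 0 ≤ mutualInfo μ W₁ Y₁ := mutualInfo_nonneg μ W₁ Y₁ hW₁ hY₁
    have e1 : condMutualInfo μ V Y₂ (fun ω => (T ω, W₂ ω))
          + condMutualInfo μ W₁ Y₂ (fun ω => (V ω, (T ω, W₂ ω)))
        = condMutualInfo μ W₁ Y₂ (fun ω => (T ω, W₂ ω))
          + condMutualInfo μ V Y₂ (fun ω => (W₁ ω, (T ω, W₂ ω))) :=
      exchange μ V W₁ Y₂ (fun ω => (T ω, W₂ ω))
    have g1 : condMutualInfo μ W₁ Y₂ (fun ω => (T ω, V ω, W₂ ω))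
        = condMutualInfo μ W₁ Y₂ (fun ω => (V ω, (T ω, W₂ ω))) :=
      cmi_comp_right μ W₁ Y₂ (fun ω => (V ω, (T ω, W₂ ω)))
        (fun q => (q.2.1, (q.1, q.2.2))) inj1
    have g2 : condMutualInfo μ V Y₂ (fun ω => (T ω, W₁ ω, W₂ ω))
        = condMutualInfo μ V Y₂ (fun ω => (W₁ ω, (T ω, W₂ ω))) :=
      cmi_comp_right μ V Y₂ (fun ω => (W₁ ω, (T ω, W₂ ω)))
        (fun q => (q.2.1, (q.1, q.2.2))) inj1
    have e2 : condMutualInfo μ U Y₁ (fun ω => (T ω, V ω, W₁ ω))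
          + condMutualInfo μ W₂ Y₁ (fun ω => (U ω, (T ω, V ω, W₁ ω)))
        = condMutualInfo μ W₂ Y₁ (fun ω => (T ω, V ω, W₁ ω))
          + condMutualInfo μ U Y₁ (fun ω => (W₂ ω, (T ω, V ω, W₁ ω))) :=
      exchange μ U W₂ Y₁ (fun ω => (T ω, V ω, W₁ ω))
    have g3 : condMutualInfo μ U Y₁ (fun ω => (T ω, V ω, W₁ ω, W₂ ω))
        = condMutualInfo μ U Y₁ (fun ω => (W₂ ω, (T ω, V ω, W₁ ω))) :=
      cmi_comp_right μ U Y₁ (fun ω => (W₂ ω, (T ω, V ω, W₁ ω)))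
        (fun q => (q.2.1, (q.2.2.1, (q.2.2.2, q.1)))) inj3
    have n2 : 0 ≤ condMutualInfo μ W₂ Y₁ (fun ω => (U ω, (T ω, V ω, W₁ ω))) :=
      condMutualInfo_nonneg μ _ _ _ hW₂ hY₁ (hU.prodMk (hT.prodMk (hV.prodMk hW₁)))
    linarith [m0, m1, m2, mn, e1, g1, g2, e2, g3, n2, hmin1, h8, h9, h1, h2, h4, h6]
  · -- R₀ + R₁ + R₂ ≤ I(V;Y₂|T,U,W₁,W₂) + I(T,W₁,W₂;Y₂) + I(U;Y₁|T,W₁,W₂)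
    have m0 : mutualInfo μ (fun ω => (T ω, W₁ ω, W₂ ω)) Y₂
        = mutualInfo μ (fun ω => (W₂ ω, (T ω, W₁ ω))) Y₂ :=
      mutualInfo_comp_left μ (fun ω => (W₂ ω, (T ω, W₁ ω))) Y₂
        (fun q => (q.2.1, (q.2.2, q.1))) inj2
    have m1 : mutualInfo μ (fun ω => (W₂ ω, (T ω, W₁ ω))) Y₂
        = mutualInfo μ W₂ Y₂ + condMutualInfo μ (fun ω => (T ω, W₁ ω)) Y₂ W₂ :=
      chain2 μ W₂ (fun ω => (T ω, W₁ ω)) Y₂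
    have m2 : condMutualInfo μ (fun ω => (T ω, W₁ ω)) Y₂ W₂
        = condMutualInfo μ T Y₂ W₂ + condMutualInfo μ W₁ Y₂ (fun ω => (T ω, W₂ ω)) :=
      chain3 μ T W₁ Y₂ W₂
    have mn : 0 ≤ mutualInfo μ W₂ Y₂ := mutualInfo_nonneg μ W₂ Y₂ hW₂ hY₂
    have e1 : condMutualInfo μ U Y₁ (fun ω => (T ω, W₁ ω))
          + condMutualInfo μ W₂ Y₁ (fun ω => (U ω, (T ω, W₁ ω)))
        = condMutualInfo μ W₂ Y₁ (fun ω => (T ω, W₁ ω))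
          + condMutualInfo μ U Y₁ (fun ω => (W₂ ω, (T ω, W₁ ω))) :=
      exchange μ U W₂ Y₁ (fun ω => (T ω, W₁ ω))
    have g1 : condMutualInfo μ W₂ Y₁ (fun ω => (T ω, U ω, W₁ ω))
        = condMutualInfo μ W₂ Y₁ (fun ω => (U ω, (T ω, W₁ ω))) :=
      cmi_comp_right μ W₂ Y₁ (fun ω => (U ω, (T ω, W₁ ω)))
        (fun q => (q.2.1, (q.1, q.2.2))) inj1
    have g2 : condMutualInfo μ U Y₁ (fun ω => (T ω, W₁ ω, W₂ ω))
        = condMutualInfo μ U Y₁ (fun ω => (W₂ ω, (T ω, W₁ ω))) :=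
      cmi_comp_right μ U Y₁ (fun ω => (W₂ ω, (T ω, W₁ ω)))
        (fun q => (q.2.1, (q.2.2, q.1))) inj2
    have e2 : condMutualInfo μ V Y₂ (fun ω => (T ω, U ω, W₂ ω))
          + condMutualInfo μ W₁ Y₂ (fun ω => (V ω, (T ω, U ω, W₂ ω)))
        = condMutualInfo μ W₁ Y₂ (fun ω => (T ω, U ω, W₂ ω))
          + condMutualInfo μ V Y₂ (fun ω => (W₁ ω, (T ω, U ω, W₂ ω))) :=
      exchange μ V W₁ Y₂ (fun ω => (T ω, U ω, W₂ ω))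
    have g3 : condMutualInfo μ V Y₂ (fun ω => (T ω, U ω, W₁ ω, W₂ ω))
        = condMutualInfo μ V Y₂ (fun ω => (W₁ ω, (T ω, U ω, W₂ ω))) :=
      cmi_comp_right μ V Y₂ (fun ω => (W₁ ω, (T ω, U ω, W₂ ω)))
        (fun q => (q.2.1, (q.2.2.1, (q.1, q.2.2.2)))) inj4
    have n2 : 0 ≤ condMutualInfo μ W₁ Y₂ (fun ω => (V ω, (T ω, U ω, W₂ ω))) :=
      condMutualInfo_nonneg μ _ _ _ hW₁ hY₂ (hV.prodMk (hT.prodMk (hU.prodMk hW₂)))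
    linarith [m0, m1, m2, mn, e1, g1, g2, e2, g3, n2, hmin2, h8, h9, h0, h3, h4, h5]
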